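/- For every real μ ≥ 0, the quotient Ψ_μ(θ)/|θ|^((q+1)/q) tends to q/(q+1) as |θ| → ∞. -/

import Mathlib

open Real Filter

noncomputable def g (s q μ ζ : ℝ) : ℝ := μ * |ζ| ^ (s - 1) * ζ + |ζ| ^ (q - 1) * ζ

lemma pow_abs_nonneg' {r x : ℝ} (hr : 0 < r) (hx : 0 ≤ x) :
    |x| ^ (r - 1) * x = x ^ r := by
  rcases hx.eq_or_lt with h | h
  · simp [← h, Real.zero_rpow hr.ne']
  · rw [abs_of_pos h, ← Real.rpow_add_one h.ne', sub_add_cancel]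

lemma sm_aux {r : ℝ} (hr : 0 < r) : StrictMono (fun x : ℝ => |x| ^ (r - 1) * x) := by
  have e1 : ∀ z : ℝ, z ≤ 0 → |z| ^ (r - 1) * z = -(|z| ^ r) := by
    intro z hz
    have h : |z| ^ (r - 1) * z = -(|z| ^ (r - 1) * |z|) := by
      rw [abs_of_nonpos hz]; ring
    rw [h, ← pow_abs_nonneg' hr (abs_nonneg z), abs_abs]
  intro x y hxy
  rcases le_or_gt 0 x with hx | hx
  · simp only
    rw [pow_abs_nonneg' hr hx, pow_abs_nonneg' hr (hx.trans hxy.le)]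
    exact Real.rpow_lt_rpow hx hxy hr
  · rcases le_or_gt y 0 with hy | hy
    · have h1 : |y| < |x| := by
        rw [abs_of_neg hx, abs_of_nonpos hy]; linarith
      have h2 : |y| ^ r < |x| ^ r := Real.rpow_lt_rpow (abs_nonneg y) h1 hr
      simp only
      rw [e1 x hx.le, e1 y hy]; linarith
    · have h1 : |x| ^ (r - 1) * x < 0 :=
        mul_neg_of_pos_of_neg (Real.rpow_pos_of_pos (abs_pos.2 hx.ne) _) hx
      have h2 : 0 < |y| ^ (r - 1) * y :=
        mul_pos (Real.rpow_pos_of_pos (abs_pos.2 hy.ne') _) hy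
      simp only; linarith

lemma g_strictMono {s q μ : ℝ} (hs : 0 < s) (hq : 0 < q) (hμ : 0 ≤ μ) :
    StrictMono (g s q μ) := by
  have h1 : Monotone (fun x : ℝ => μ * (|x| ^ (s - 1) * x)) :=
    (sm_aux hs).monotone.const_mul hμ
  intro a b hab
  have := h1.add_strictMono (sm_aux hq) hab
  simpa [g, mul_assoc] using this

lemma g_odd (s q μ ζ : ℝ) : g s q μ (-ζ) = -g s q μ ζ := by
  simp only [g, abs_neg]; ring

lemma g_pos_eq {s q μ : ℝ} (hs : 0 < s) (hq : 0 < q) {ζ : ℝ} (hζ : 0 < ζ) :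
    g s q μ ζ = μ * ζ ^ s + ζ ^ q := by
  simp only [g, mul_assoc]
  rw [pow_abs_nonneg' hs hζ.le, pow_abs_nonneg' hq hζ.le]

theorem stmt_8 (s q : ℝ) (hs : 0 < s) (hsq : s < q) (μ : ℝ) (hμ : 0 ≤ μ)
    (ψ : ℝ → ℝ)
    (hψ_right : ∀ θ : ℝ, g s q μ (ψ θ) = θ)
    (hψ_left : ∀ ζ : ℝ, ψ (g s q μ ζ) = ζ)
    (Ψ : ℝ → ℝ)
    (hΨ : ∀ θ : ℝ, Ψ θ = ∫ t in (0 : ℝ)..θ, ψ t) :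
    Tendsto (fun θ : ℝ => Ψ θ / |θ| ^ ((q + 1) / q)) (cocompact ℝ)
      (nhds (q / (q + 1))) := by
  have hq : 0 < q := hs.trans hsq
  have hs1 : s + 1 ≠ 0 := by positivity
  have hq1 : q + 1 ≠ 0 := by positivity
  have hΨfun : Ψ = fun θ => ∫ t in (0 : ℝ)..θ, ψ t := funext hΨ
  subst hΨfun
  have hgm : StrictMono (g s q μ) := g_strictMono hs hq hμ
  have hgsurj : Function.Surjective (g s q μ) := fun θ => ⟨ψ θ, hψ_right θ⟩
  have hψe : ψ = ⇑(StrictMono.orderIsoOfSurjective _ hgm hgsurj).symm := by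
    funext θ
    obtain ⟨ζ, rfl⟩ := hgsurj θ
    rw [hψ_left]
    exact (StrictMono.orderIsoOfSurjective_symm_apply_self _ hgm hgsurj ζ).symm
  have hψcont : Continuous ψ := by
    rw [hψe]; exact (StrictMono.orderIsoOfSurjective _ hgm hgsurj).symm.continuous
  have hψmono : Monotone ψ := by
    rw [hψe]; exact (StrictMono.orderIsoOfSurjective _ hgm hgsurj).symm.monotone
  have hψtop : Tendsto ψ atTop atTop :=
    tendsto_atTop_atTop_of_monotone hψmono fun b => ⟨g s q μ b, (hψ_left b).ge⟩
  have hψodd : ∀ θ, ψ (-θ) = -ψ θ := by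
    intro θ
    have h := hψ_left (-(ψ θ))
    rw [g_odd, hψ_right] at h
    exact h
  have hΨder : ∀ b : ℝ, HasDerivAt (fun θ => ∫ t in (0 : ℝ)..θ, ψ t) (ψ b) b :=
    fun b => (hψcont.integral_hasStrictDerivAt 0 b).hasDerivAt
  have hgder : ∀ ζ : ℝ, 0 < ζ →
      HasDerivAt (g s q μ) (μ * (s * ζ ^ (s - 1)) + q * ζ ^ (q - 1)) ζ := by
    intro ζ hζ
    have h1 : HasDerivAt (fun x : ℝ => μ * x ^ s + x ^ q)
        (μ * (s * ζ ^ (s - 1)) + q * ζ ^ (q - 1)) ζ :=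
      ((Real.hasDerivAt_rpow_const (Or.inl hζ.ne')).const_mul μ).add
        (Real.hasDerivAt_rpow_const (Or.inl hζ.ne'))
    refine h1.congr_of_eventuallyEq ?_
    filter_upwards [eventually_gt_nhds hζ] with x hx
    exact g_pos_eq hs hq hx
  set H : ℝ → ℝ := fun ζ =>
      (∫ t in (0 : ℝ)..g s q μ ζ, ψ t) - ζ * g s q μ ζ
        + μ * ζ ^ (s + 1) / (s + 1) + ζ ^ (q + 1) / (q + 1) with hHdef
  have hHder : ∀ ζ : ℝ, 0 < ζ → HasDerivAt H 0 ζ := by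
    intro ζ hζ
    have hd := hgder ζ hζ
    have h2 : HasDerivAt (fun x => ∫ t in (0 : ℝ)..g s q μ x, ψ t)
        (ψ (g s q μ ζ) * (μ * (s * ζ ^ (s - 1)) + q * ζ ^ (q - 1))) ζ :=
      (hΨder (g s q μ ζ)).comp ζ hd
    rw [hψ_left] at h2
    have h3 : HasDerivAt (fun x : ℝ => x * g s q μ x)
        (1 * g s q μ ζ + ζ * (μ * (s * ζ ^ (s - 1)) + q * ζ ^ (q - 1))) ζ :=
      (hasDerivAt_id ζ).mul hd
    have h4 : HasDerivAt (fun x : ℝ => μ * x ^ (s + 1) / (s + 1))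
        (μ * ((s + 1) * ζ ^ (s + 1 - 1)) / (s + 1)) ζ :=
      ((Real.hasDerivAt_rpow_const (Or.inl hζ.ne')).const_mul μ).div_const (s + 1)
    have h5 : HasDerivAt (fun x : ℝ => x ^ (q + 1) / (q + 1))
        ((q + 1) * ζ ^ (q + 1 - 1) / (q + 1)) ζ :=
      (Real.hasDerivAt_rpow_const (Or.inl hζ.ne')).div_const (q + 1)
    have h6 := ((h2.sub h3).add h4).add h5
    have hD : ζ * (μ * (s * ζ ^ (s - 1)) + q * ζ ^ (q - 1))
        - (1 * g s q μ ζ + ζ * (μ * (s * ζ ^ (s - 1)) + q * ζ ^ (q - 1)))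
        + μ * ((s + 1) * ζ ^ (s + 1 - 1)) / (s + 1)
        + (q + 1) * ζ ^ (q + 1 - 1) / (q + 1) = 0 := by
      rw [g_pos_eq hs hq hζ, show s + 1 - 1 = s by ring, show q + 1 - 1 = q by ring]
      field_simp
      ring
    rw [hD] at h6
    exact h6
  have hconst : ∀ ζ : ℝ, 1 ≤ ζ → H ζ = H 1 := by
    intro ζ hζ
    refine constant_of_has_deriv_right_zero (f := H) (a := 1) (b := ζ)
      (fun x hx => (hHder x (by have := hx.1; linarith)).continuousAt.continuousWithinAt)
      (fun x hx => (hHder x (by have := hx.1; linarith)).hasDerivWithinAt)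
      ζ ⟨hζ, le_refl ζ⟩
  set c : ℝ := H 1 with hcdef
  have hyoung : ∀ ζ : ℝ, 1 ≤ ζ →
      (∫ t in (0 : ℝ)..g s q μ ζ, ψ t)
        = ζ * g s q μ ζ - μ * ζ ^ (s + 1) / (s + 1) - ζ ^ (q + 1) / (q + 1) + c := by
    intro ζ hζ
    have h := hconst ζ hζ
    rw [hHdef] at h
    simp only at h
    linarith
  -- key algebraic identity
  have key : ∀ ζ : ℝ, 1 ≤ ζ →
      (∫ t in (0 : ℝ)..g s q μ ζ, ψ t) / (g s q μ ζ) ^ ((q + 1) / q)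
        = ((1 + μ * ζ ^ (s - q)) - μ * ζ ^ (s - q) / (s + 1) - 1 / (q + 1)
            + c * ζ ^ (-(q + 1)))
          / (1 + μ * ζ ^ (s - q)) ^ ((q + 1) / q) := by
    intro ζ hζ
    have hζ0 : (0 : ℝ) < ζ := lt_of_lt_of_le one_pos hζ
    have hw : (0 : ℝ) < 1 + μ * ζ ^ (s - q) := by positivity
    have a1 : ζ ^ (q + 1) = ζ ^ q * ζ := Real.rpow_add_one hζ0.ne' q
    have a2 : ζ ^ (q + 1) * ζ ^ (s - q) = ζ ^ (s + 1) := by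
      rw [← Real.rpow_add hζ0]; congr 1; ring
    have a3 : ζ ^ (q + 1) * ζ ^ (-(q + 1)) = 1 := by
      rw [← Real.rpow_add hζ0, add_neg_cancel, Real.rpow_zero]
    have hgw : g s q μ ζ = ζ ^ q * (1 + μ * ζ ^ (s - q)) := by
      have h2 : ζ ^ q * ζ ^ (s - q) = ζ ^ s := by
        rw [← Real.rpow_add hζ0]; congr 1; ring
      rw [g_pos_eq hs hq hζ0]
      linear_combination (-μ) * h2
    have hd : (g s q μ ζ) ^ ((q + 1) / q)
        = ζ ^ (q + 1) * (1 + μ * ζ ^ (s - q)) ^ ((q + 1) / q) := by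
      rw [hgw, Real.mul_rpow (Real.rpow_nonneg hζ0.le q) hw.le,
        ← Real.rpow_mul hζ0.le,
        show q * ((q + 1) / q) = q + 1 by rw [mul_comm, div_mul_cancel₀ _ hq.ne']]
    have hnum : ζ * (ζ ^ q * (1 + μ * ζ ^ (s - q))) - μ * ζ ^ (s + 1) / (s + 1)
        - ζ ^ (q + 1) / (q + 1) + c
        = ζ ^ (q + 1) * ((1 + μ * ζ ^ (s - q)) - μ * ζ ^ (s - q) / (s + 1)
            - 1 / (q + 1) + c * ζ ^ (-(q + 1))) := by
      linear_combination (-(1 + μ * ζ ^ (s - q))) * a1 + (μ / (s + 1)) * a2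
        + (-c) * a3
    rw [hyoung ζ hζ, hd, hgw, hnum,
      mul_div_mul_left _ _ (by positivity : (ζ : ℝ) ^ (q + 1) ≠ 0)]
  have tA : Tendsto (fun ζ : ℝ => ζ ^ (s - q)) atTop (nhds 0) := by
    have h := tendsto_rpow_neg_atTop (y := q - s) (by linarith)
    simpa [neg_sub] using h
  have tB : Tendsto (fun ζ : ℝ => ζ ^ (-(q + 1))) atTop (nhds 0) :=
    tendsto_rpow_neg_atTop (by linarith)
  have tw : Tendsto (fun ζ : ℝ => 1 + μ * ζ ^ (s - q)) atTop (nhds 1) := by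
    have h := (tA.const_mul μ).const_add 1
    simpa using h
  have twp : Tendsto (fun ζ : ℝ => (1 + μ * ζ ^ (s - q)) ^ ((q + 1) / q))
      atTop (nhds 1) := by
    have hcont : ContinuousAt (fun x : ℝ => x ^ ((q + 1) / q)) 1 :=
      Real.continuousAt_rpow_const 1 _ (Or.inl one_ne_zero)
    have h := hcont.tendsto.comp tw
    simpa [Function.comp_def] using h
  have tnum : Tendsto (fun ζ : ℝ => (1 + μ * ζ ^ (s - q)) - μ * ζ ^ (s - q) / (s + 1)
      - 1 / (q + 1) + c * ζ ^ (-(q + 1))) atTop (nhds (q / (q + 1))) := by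
    have h := ((tw.sub ((tA.const_mul μ).div_const (s + 1))).sub_const
      (1 / (q + 1))).add (tB.const_mul c)
    have he : (1 : ℝ) - μ * 0 / (s + 1) - 1 / (q + 1) + c * 0 = q / (q + 1) := by
      field_simp
      ring
    rw [he] at h
    exact h
  have tE : Tendsto (fun ζ : ℝ => ((1 + μ * ζ ^ (s - q)) - μ * ζ ^ (s - q) / (s + 1)
      - 1 / (q + 1) + c * ζ ^ (-(q + 1))) / (1 + μ * ζ ^ (s - q)) ^ ((q + 1) / q))
      atTop (nhds (q / (q + 1))) := by
    have h := tnum.div twp one_ne_zero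
    simpa [Pi.div_def] using h
  have hF : Tendsto
      (fun ζ : ℝ => (∫ t in (0:ℝ)..g s q μ ζ, ψ t) / (g s q μ ζ) ^ ((q + 1) / q))
      atTop (nhds (q / (q + 1))) := by
    refine tE.congr' ?_
    filter_upwards [eventually_ge_atTop (1 : ℝ)] with ζ hζ
    exact (key ζ hζ).symm
  have hTop : Tendsto (fun θ : ℝ => (∫ t in (0:ℝ)..θ, ψ t) / |θ| ^ ((q + 1) / q))
      atTop (nhds (q / (q + 1))) := by
    refine (hF.comp hψtop).congr' ?_
    filter_upwards [eventually_gt_atTop (0 : ℝ)] with θ h0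
    simp only [Function.comp_apply, hψ_right θ, abs_of_pos h0]
  have hΨeven : ∀ θ : ℝ, (∫ t in (0:ℝ)..(-θ), ψ t) = ∫ t in (0:ℝ)..θ, ψ t := by
    intro θ
    have h1 := intervalIntegral.integral_comp_neg (a := (0:ℝ)) (b := θ) (f := ψ)
    simp only [hψodd, neg_zero] at h1
    rw [intervalIntegral.integral_neg, intervalIntegral.integral_symm 0 (-θ)] at h1
    linarith
  have hBot : Tendsto (fun θ : ℝ => (∫ t in (0:ℝ)..θ, ψ t) / |θ| ^ ((q + 1) / q))
      atBot (nhds (q / (q + 1))) := by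
    rw [← map_neg_atTop, tendsto_map'_iff]
    refine hTop.congr fun θ => ?_
    simp only [Function.comp_apply, abs_neg, hΨeven]
  rw [cocompact_eq_atBot_atTop, tendsto_sup]
  exact ⟨hBot, hTop⟩
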